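/- Continuity of the stopped (absorbing-floor) final-position map: for φ ∈ [0, π] let τ(φ) := inf {t ≥ 0 : A φ t ∈ {0, π}} if this set is nonempty (so τ(0) = τ(π) = 0), and define, for T ≥ 0, the stopped position ĝ_T(φ) := A φ (min(T, τ(φ))) when the set is nonempty and ĝ_T(φ) := A φ T otherwise. Then for every T ≥ 0 the map ĝ_T : [0, π] → ℝ is continuous. (This is the continuity assumption of Courant and Robbins for the motion in which the rod remains on the floor once it touches it, valid for a flat floor.) -/

import Mathlib

/-- `α` is a solution of the inverted-pendulum equation
`α'' t = -g * cos (α t) + u t * sin (α t)`. -/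
def IsPendulumSolution (g : ℝ) (u : ℝ → ℝ) (α : ℝ → ℝ) : Prop :=
  ContDiff ℝ 2 α ∧
    ∀ t : ℝ, deriv (deriv α) t = -g * Real.cos (α t) + u t * Real.sin (α t)

open Real Set Filter Topology

namespace Pend

variable {g : ℝ} {u : ℝ → ℝ} {α : ℝ → ℝ}

lemma diffA (h : IsPendulumSolution g u α) : Differentiable ℝ α :=
  h.1.differentiable (by norm_num)

lemma contDiff_deriv (h : IsPendulumSolution g u α) : ContDiff ℝ 1 (deriv α) := by
  have h2 : ContDiff ℝ (1 + 1 : ℕ) α := by exact_mod_cast h.1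
  rw [show ((1 + 1 : ℕ) : WithTop ℕ∞) = (1 : WithTop ℕ∞) + 1 by norm_num] at h2
  exact (contDiff_succ_iff_deriv.mp h2).2.2

lemma hasDerivAt_A (h : IsPendulumSolution g u α) (t : ℝ) :
    HasDerivAt α (deriv α t) t := (diffA h t).hasDerivAt

lemma hasDerivAt_deriv (h : IsPendulumSolution g u α) (t : ℝ) :
    HasDerivAt (deriv α) (-g * Real.cos (α t) + u t * Real.sin (α t)) t := by
  have := ((contDiff_deriv h).differentiable one_ne_zero t).hasDerivAt
  rwa [h.2 t] at this

lemma lipschitz_cos : LipschitzWith 1 Real.cos := by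
  apply lipschitzWith_of_nnnorm_deriv_le Real.differentiable_cos
  intro x
  rw [← NNReal.coe_le_coe, coe_nnnorm, Real.deriv_cos, Real.norm_eq_abs, abs_neg]
  exact Real.abs_sin_le_one x

lemma lipschitz_sin : LipschitzWith 1 Real.sin := by
  apply lipschitzWith_of_nnnorm_deriv_le Real.differentiable_sin
  intro x
  rw [← NNReal.coe_le_coe, coe_nnnorm, Real.deriv_sin, Real.norm_eq_abs]
  exact Real.abs_cos_le_one x

lemma gronwall (g : ℝ) (hg : 0 < g) (u : ℝ → ℝ) (hu : Continuous u) (A : ℝ → ℝ → ℝ)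
    (hA : ∀ φ : ℝ, IsPendulumSolution g u (A φ) ∧ A φ 0 = φ ∧ deriv (A φ) 0 = 0)
    (b : ℝ) (hb : 0 ≤ b) :
    ∃ L : ℝ, 0 < L ∧ ∀ φ ψ : ℝ, ∀ t ∈ Icc 0 b, |A φ t - A ψ t| ≤ L * |φ - ψ| := by
  obtain ⟨C0, hC0⟩ := (isCompact_Icc (a := (0:ℝ)) (b := b)).exists_bound_of_continuousOn
    hu.continuousOn
  set C := max C0 0 with hC
  have hCnn : 0 ≤ C := le_max_right _ _
  have hub : ∀ t : ℝ, |u (max 0 (min t b))| ≤ C := by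
    intro t
    refine le_trans ?_ (le_max_left _ _)
    rw [← Real.norm_eq_abs]
    exact hC0 _ ⟨le_max_left _ _, max_le (hb) (min_le_right _ _)⟩
  set Kr : ℝ := max 1 (g + C) with hKr
  have hKr1 : (1 : ℝ) ≤ Kr := le_max_left _ _
  set K : NNReal := ⟨Kr, le_trans zero_le_one hKr1⟩ with hK
  have hKcoe : (K : ℝ) = Kr := rfl
  set v : ℝ → ℝ × ℝ → ℝ × ℝ := fun t x =>
    (x.2, -g * Real.cos x.1 + u (max 0 (min t b)) * Real.sin x.1) with hv_def
  have hv : ∀ t, LipschitzWith K (v t) := by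
    intro t
    apply LipschitzWith.of_dist_le_mul
    intro x y
    rw [Prod.dist_eq]
    have hx1 : dist x.1 y.1 ≤ dist x y := by rw [Prod.dist_eq]; exact le_max_left _ _
    have hx2 : dist x.2 y.2 ≤ dist x y := by rw [Prod.dist_eq]; exact le_max_right _ _
    apply max_le
    · calc dist x.2 y.2 ≤ dist x y := hx2
        _ ≤ Kr * dist x y := le_mul_of_one_le_left dist_nonneg hKr1
    · set e := u (max 0 (min t b)) with he
      have hcos : dist (Real.cos x.1) (Real.cos y.1) ≤ dist x.1 y.1 := by
        simpa using lipschitz_cos.dist_le_mul x.1 y.1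
      have hsin : dist (Real.sin x.1) (Real.sin y.1) ≤ dist x.1 y.1 := by
        simpa using lipschitz_sin.dist_le_mul x.1 y.1
      calc dist (-g * Real.cos x.1 + e * Real.sin x.1) (-g * Real.cos y.1 + e * Real.sin y.1)
          ≤ dist (-g * Real.cos x.1) (-g * Real.cos y.1)
            + dist (e * Real.sin x.1) (e * Real.sin y.1) := dist_add_add_le _ _ _ _
        _ = |(-g)| * dist (Real.cos x.1) (Real.cos y.1)
            + |e| * dist (Real.sin x.1) (Real.sin y.1) := by
              rw [Real.dist_eq, Real.dist_eq, Real.dist_eq, Real.dist_eq,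
                ← mul_sub, ← mul_sub, abs_mul, abs_mul]
        _ ≤ g * dist x.1 y.1 + C * dist x.1 y.1 := by
              rw [abs_neg, abs_of_pos hg]
              gcongr
              exact hub t
        _ = (g + C) * dist x.1 y.1 := by ring
        _ ≤ Kr * dist x y := by
              apply mul_le_mul (le_max_right _ _) hx1 dist_nonneg
              exact le_trans zero_le_one hKr1
  set F : ℝ → ℝ → ℝ × ℝ := fun φ t => (A φ t, deriv (A φ) t) with hF
  have hFc : ∀ φ, Continuous (F φ) := fun φ =>
    ((hA φ).1.1.continuous).prodMk (contDiff_deriv (hA φ).1).continuous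
  have hF' : ∀ φ, ∀ t ∈ Ico (0 : ℝ) b, HasDerivWithinAt (F φ) (v t (F φ t)) (Ici t) t := by
    intro φ t ht
    have h1 := hasDerivAt_A (hA φ).1 t
    have h2 := hasDerivAt_deriv (hA φ).1 t
    have h3 := (h1.prodMk h2).hasDerivWithinAt (s := Ici t)
    have ht' : max 0 (min t b) = t := by
      rw [min_eq_left ht.2.le, max_eq_right ht.1]
    show HasDerivWithinAt (fun x => (A φ x, deriv (A φ) x))
      (deriv (A φ) t, -g * Real.cos (A φ t) + u (max 0 (min t b)) * Real.sin (A φ t)) (Ici t) t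
    rw [ht']; exact h3
  refine ⟨Real.exp (Kr * b), Real.exp_pos _, fun φ ψ t ht => ?_⟩
  have key := dist_le_of_trajectories_ODE hv (hFc φ).continuousOn (hF' φ)
    (hFc ψ).continuousOn (hF' ψ) (le_refl (dist (F φ 0) (F ψ 0))) t ht
  have hinit : dist (F φ 0) (F ψ 0) = |φ - ψ| := by
    rw [Prod.dist_eq]
    simp [hF, (hA φ).2.1, (hA ψ).2.1, (hA φ).2.2, (hA ψ).2.2, Real.dist_eq]
  have h1 : |A φ t - A ψ t| = dist (F φ t).1 (F ψ t).1 := by rw [Real.dist_eq]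
  rw [h1]
  calc dist (F φ t).1 (F ψ t).1 ≤ dist (F φ t) (F ψ t) := by
        rw [Prod.dist_eq]; exact le_max_left _ _
    _ ≤ dist (F φ 0) (F ψ 0) * Real.exp ((K : ℝ) * (t - 0)) := key
    _ ≤ Real.exp (Kr * b) * |φ - ψ| := by
        rw [hinit, hKcoe, mul_comm]
        have h0K : (0:ℝ) ≤ Kr := le_trans zero_le_one hKr1
        have : Kr * (t - 0) ≤ Kr * b := by nlinarith [ht.1, ht.2]
        gcongr

lemma slope_neg {f : ℝ → ℝ} {t v : ℝ} (hf : HasDerivAt f v t) (hv : v < 0) :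
    (∀ᶠ s in 𝓝[>] t, f s < f t) ∧ ∀ᶠ s in 𝓝[<] t, f t < f s := by
  have h := hasDerivAt_iff_tendsto_slope.mp hf
  have h0 : ∀ᶠ s in 𝓝[≠] t, slope f t s < 0 := h.eventually_lt_const hv
  have hgt : 𝓝[>] t ≤ 𝓝[≠] t := nhdsWithin_mono _ (fun s hs => ne_of_gt hs)
  have hlt : 𝓝[<] t ≤ 𝓝[≠] t := nhdsWithin_mono _ (fun s hs => ne_of_lt hs)
  constructor
  · filter_upwards [hgt h0, self_mem_nhdsWithin] with s hs hs'
    have hst : t < s := hs'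
    rw [slope_def_field, div_neg_iff] at hs
    rcases hs with ⟨h1, h2⟩ | ⟨h1, h2⟩ <;> linarith
  · filter_upwards [hlt h0, self_mem_nhdsWithin] with s hs hs'
    have hst : s < t := hs'
    rw [slope_def_field, div_neg_iff] at hs
    rcases hs with ⟨h1, h2⟩ | ⟨h1, h2⟩ <;> linarith

lemma slope_pos {f : ℝ → ℝ} {t v : ℝ} (hf : HasDerivAt f v t) (hv : 0 < v) :
    (∀ᶠ s in 𝓝[>] t, f t < f s) ∧ ∀ᶠ s in 𝓝[<] t, f s < f t := by
  have h := (slope_neg (t := t) (f := fun s => -f s) (v := -v) (hf.neg) (by linarith))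
  constructor
  · filter_upwards [h.1] with s hs; simpa using hs
  · filter_upwards [h.2] with s hs; simpa using hs

/-- `α` stays in `(0, π)` as long as it has not touched the boundary. -/
lemma stays {α : ℝ → ℝ} (hc : Continuous α) {φ : ℝ} (h0 : α 0 = φ)
    (hφ : φ ∈ Ioo 0 Real.pi) {t : ℝ}
    (h : ∀ s, 0 ≤ s → s ≤ t → ¬(α s = 0 ∨ α s = Real.pi)) :
    ∀ s, 0 ≤ s → s ≤ t → α s ∈ Ioo 0 Real.pi := by
  intro s hs0 hst
  by_contra hcon
  rw [mem_Ioo, not_and_or, not_lt, not_lt] at hcon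
  rcases hcon with hle | hge
  · have : (0 : ℝ) ∈ Icc (α s) (α 0) := by rw [h0]; exact ⟨hle, hφ.1.le⟩
    obtain ⟨r, hr, hr0⟩ := intermediate_value_Icc' hs0 hc.continuousOn this
    exact h r hr.1 (hr.2.trans hst) (Or.inl hr0)
  · have : Real.pi ∈ Icc (α 0) (α s) := by rw [h0]; exact ⟨hφ.2.le, hge⟩
    obtain ⟨r, hr, hr0⟩ := intermediate_value_Icc hs0 hc.continuousOn this
    exact h r hr.1 (hr.2.trans hst) (Or.inr hr0)

lemma hit_closed {α : ℝ → ℝ} (hc : Continuous α) :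
    IsClosed {t : ℝ | 0 ≤ t ∧ (α t = 0 ∨ α t = Real.pi)} := by
  have : {t : ℝ | 0 ≤ t ∧ (α t = 0 ∨ α t = Real.pi)}
      = Ici 0 ∩ (α ⁻¹' ({0} ∪ {Real.pi})) := by
    ext t
    simp only [mem_setOf_eq, mem_inter_iff, mem_Ici, mem_preimage, mem_union,
      mem_singleton_iff]
  rw [this]
  exact isClosed_Ici.inter ((isClosed_singleton.union isClosed_singleton).preimage hc)

lemma hit_deriv_neg {g : ℝ} (hg : 0 < g) {u : ℝ → ℝ} {α : ℝ → ℝ}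
    (hα : IsPendulumSolution g u α) {φ : ℝ} (h0 : α 0 = φ) (hφ : φ ∈ Ioo 0 Real.pi)
    (hne : {t : ℝ | 0 ≤ t ∧ (α t = 0 ∨ α t = Real.pi)}.Nonempty)
    (hτ0 : α (sInf {t : ℝ | 0 ≤ t ∧ (α t = 0 ∨ α t = Real.pi)}) = 0) :
    deriv α (sInf {t : ℝ | 0 ≤ t ∧ (α t = 0 ∨ α t = Real.pi)}) < 0 := by
  set H := {t : ℝ | 0 ≤ t ∧ (α t = 0 ∨ α t = Real.pi)} with hH
  have hc := hα.1.continuous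
  have hBdd : BddBelow H := ⟨0, fun x hx => hx.1⟩
  set τ := sInf H with hτdef
  have hτH : τ ∈ H := (hit_closed hc).csInf_mem hne hBdd
  have hτnn : 0 ≤ τ := hτH.1
  have hτpos : 0 < τ := by
    rcases hτnn.lt_or_eq with h | h
    · exact h
    · exfalso; rw [← h, h0] at hτ0; exact hφ.1.ne' hτ0
  have hpre : ∀ s, 0 ≤ s → s < τ → α s ∈ Ioo 0 Real.pi := by
    intro s hs0 hsτ
    refine stays hc h0 hφ (t := s) (fun r hr0 hrs hmem => ?_) s hs0 le_rfl
    have : τ ≤ r := csInf_le hBdd (⟨hr0, hmem⟩ : r ∈ H)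
    linarith
  by_contra hcon
  push_neg at hcon
  rcases hcon.lt_or_eq with hd | hd
  · have hev := (slope_pos (hasDerivAt_A hα τ) hd).2
    have hmem : Ioo 0 τ ∈ 𝓝[<] τ := Ioo_mem_nhdsLT_of_mem ⟨hτpos, le_rfl⟩
    obtain ⟨s, hs1, hs2⟩ :=
      (hev.and (eventually_of_mem hmem (fun x hx => hx))).exists
    rw [hτ0] at hs1
    have := (hpre s hs2.1.le hs2.2).1
    linarith
  · have h2 := hasDerivAt_deriv hα τ
    have h2' : HasDerivAt (deriv α) (-g) τ := by
      convert h2 using 1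
      rw [hτ0]
      simp
    have hev := (slope_neg h2' (by linarith)).2
    obtain ⟨l, hl, hsub⟩ := mem_nhdsLT_iff_exists_Ioo_subset.mp hev
    set m := max l 0 with hm
    have hmτ : m < τ := max_lt hl hτpos
    set p := (m + τ)/2 with hp
    have hpm : m < p := by rw [hp]; linarith
    have hpτ : p < τ := by rw [hp]; linarith
    have hp0 : 0 ≤ p := le_trans (le_max_right l 0) hpm.le
    have hmono : StrictMonoOn α (Icc p τ) := by
      apply strictMonoOn_of_deriv_pos (convex_Icc p τ) hc.continuousOn
      intro x hx
      rw [interior_Icc] at hx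
      have hxl : x ∈ Ioo l τ := ⟨lt_of_le_of_lt (le_trans (le_max_left l 0) hpm.le) hx.1, hx.2⟩
      have := hsub hxl
      rw [mem_setOf_eq] at this
      linarith [this, hd.symm ▸ this]
    have hlt : α p < α τ := hmono ⟨le_rfl, hpτ.le⟩ ⟨hpτ.le, le_rfl⟩ hpτ
    have := (hpre p hp0 hpτ).1
    rw [hτ0] at hlt
    linarith

open Classical in
lemma trap (g : ℝ) (hg : 0 < g) (u : ℝ → ℝ) (hu : Continuous u) (A : ℝ → ℝ → ℝ)
    (hA : ∀ φ : ℝ, IsPendulumSolution g u (A φ) ∧ A φ 0 = φ ∧ deriv (A φ) 0 = 0)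
    (T : ℝ) (hT : 0 ≤ T) :
    ∃ δ0 : ℝ, 0 < δ0 ∧ δ0 < Real.pi ∧ ∀ ψ : ℝ, 0 < ψ → ψ ≤ δ0 →
      (if ({t : ℝ | 0 ≤ t ∧ (A ψ t = 0 ∨ A ψ t = Real.pi)}).Nonempty
        then A ψ (min T (sInf {t : ℝ | 0 ≤ t ∧ (A ψ t = 0 ∨ A ψ t = Real.pi)}))
        else A ψ T) ∈ Icc (0:ℝ) ψ := by
  obtain ⟨C0, hC0⟩ := (isCompact_Icc (a := (0:ℝ)) (b := T)).exists_bound_of_continuousOn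
    hu.continuousOn
  set C := max C0 0 with hCdef
  have hCnn : 0 ≤ C := le_max_right _ _
  set δ0 : ℝ := min 1 (g / (4 * (C + 1))) with hδ0def
  have hδ0pos : 0 < δ0 := lt_min one_pos (by positivity)
  have hδ0le1 : δ0 ≤ 1 := min_le_left _ _
  have hδ0π : δ0 < Real.pi := lt_of_le_of_lt hδ0le1 (by linarith [Real.pi_gt_three])
  refine ⟨δ0, hδ0pos, hδ0π, fun ψ hψ0 hψδ => ?_⟩
  have hψπ : ψ ∈ Ioo 0 Real.pi := ⟨hψ0, lt_of_le_of_lt hψδ hδ0π⟩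
  obtain ⟨hαsol, hα0, hα'0⟩ := hA ψ
  set α := A ψ with hαdef
  have hc : Continuous α := hαsol.1.continuous
  -- second derivative is negative while `α ∈ (0, ψ]` and `t ∈ [0, T]`
  have hsec : ∀ s, 0 ≤ s → s ≤ T → 0 < α s → α s ≤ ψ → deriv (deriv α) s < 0 := by
    intro s hs0 hsT hpos hle
    rw [hαsol.2 s]
    have hy1 : α s ≤ 1 := le_trans hle (le_trans hψδ (min_le_left _ _))
    have hyC : α s ≤ g / (4 * (C + 1)) := le_trans hle (le_trans hψδ (min_le_right _ _))
    have hcos : (1:ℝ)/2 ≤ Real.cos (α s) := by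
      have h := Real.one_sub_sq_div_two_le_cos (x := α s)
      nlinarith [sq_nonneg (α s)]
    have hsin0 : 0 ≤ Real.sin (α s) :=
      Real.sin_nonneg_of_nonneg_of_le_pi hpos.le (by linarith [Real.pi_gt_three])
    have hsin1 : Real.sin (α s) ≤ α s := Real.sin_le hpos.le
    have hus : |u s| ≤ C := by
      refine le_trans ?_ (le_max_left _ _)
      rw [← Real.norm_eq_abs]; exact hC0 s ⟨hs0, hsT⟩
    have h5 : u s * Real.sin (α s) ≤ C * (g / (4 * (C + 1))) := by
      calc u s * Real.sin (α s) ≤ |u s| * Real.sin (α s) :=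
            mul_le_mul_of_nonneg_right (le_abs_self _) hsin0
        _ ≤ C * α s := mul_le_mul hus hsin1 hsin0 hCnn
        _ ≤ C * (g / (4 * (C + 1))) := mul_le_mul_of_nonneg_left hyC hCnn
    have h6 : C * (g / (4 * (C + 1))) ≤ g / 4 := by
      rw [mul_div_assoc']
      rw [div_le_div_iff₀ (by positivity) (by norm_num)]
      nlinarith
    nlinarith
  -- core claim: as long as the solution stays inside, it remains below `ψ`
  have core : ∀ t, 0 ≤ t → t ≤ T → (∀ s, 0 ≤ s → s < t → α s ∈ Ioo 0 Real.pi) →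
      ∀ s, 0 ≤ s → s ≤ t → α s ≤ ψ := by
    intro t ht0 htT hint
    set S := {r : ℝ | r ∈ Icc 0 t ∧ ∀ s, 0 ≤ s → s ≤ r → α s ≤ ψ} with hSdef
    have h0S : (0:ℝ) ∈ S := by
      refine ⟨⟨le_rfl, ht0⟩, fun s hs0 hs1 => ?_⟩
      have : s = 0 := le_antisymm hs1 hs0
      rw [this, hα0]
    have hbdd : BddAbove S := ⟨t, fun r hr => hr.1.2⟩
    set s₀ := sSup S with hs₀def
    have hs₀0 : 0 ≤ s₀ := le_csSup hbdd h0S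
    have hs₀t : s₀ ≤ t := csSup_le ⟨0, h0S⟩ (fun r hr => hr.1.2)
    have hA' : ∀ s, 0 ≤ s → s < s₀ → α s ≤ ψ := by
      intro s hs0 hss
      obtain ⟨r, hrS, hsr⟩ := exists_lt_of_lt_csSup ⟨0, h0S⟩ hss
      exact hrS.2 s hs0 hsr.le
    have hPs₀ : ∀ s, 0 ≤ s → s ≤ s₀ → α s ≤ ψ := by
      intro s hs0 hss
      rcases hss.lt_or_eq with h | h
      · exact hA' s hs0 h
      · rw [h]
        rcases hs₀0.lt_or_eq with hpos | hzero
        · have htd : Tendsto α (𝓝[<] s₀) (𝓝 (α s₀)) :=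
            (hc.tendsto s₀).mono_left nhdsWithin_le_nhds
          refine le_of_tendsto htd ?_
          filter_upwards [Ioo_mem_nhdsLT_of_mem (⟨hpos, le_rfl⟩ : s₀ ∈ Ioc 0 s₀)] with r hr
          exact hA' r hr.1.le hr.2
        · rw [← hzero, hα0]
    rcases hs₀t.lt_or_eq with hlt | heq
    · exfalso
      have hins₀ : α s₀ ∈ Ioo 0 Real.pi := hint s₀ hs₀0 hlt
      have hder0 : deriv α s₀ ≤ 0 := by
        rcases hs₀0.lt_or_eq with hpos | hzero
        · have hanti : StrictAntiOn (deriv α) (Icc 0 s₀) := by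
            apply strictAntiOn_of_deriv_neg (convex_Icc 0 s₀)
              (contDiff_deriv hαsol).continuous.continuousOn
            intro x hx
            rw [interior_Icc] at hx
            exact hsec x hx.1.le (le_trans (le_trans hx.2.le hs₀t) htT)
              (hint x hx.1.le (lt_trans hx.2 hlt)).1 (hPs₀ x hx.1.le hx.2.le)
          have h := hanti (⟨le_rfl, hs₀0⟩ : (0:ℝ) ∈ Icc 0 s₀) ⟨hs₀0, le_rfl⟩ hpos
          rw [hα'0] at h
          linarith
        · rw [← hzero, hα'0]
      have hdec : ∃ c, s₀ < c ∧ ∀ s ∈ Ioo s₀ c, α s ≤ α s₀ := by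
        rcases hder0.lt_or_eq with hneg | hzero
        · have hev := (slope_neg (hasDerivAt_A hαsol s₀) hneg).1
          obtain ⟨c, hc1, hc2⟩ := mem_nhdsGT_iff_exists_Ioo_subset.mp hev
          exact ⟨c, hc1, fun s hs => (hc2 hs).le⟩
        · have hs2' : HasDerivAt (deriv α) (deriv (deriv α) s₀) s₀ :=
            ((contDiff_deriv hαsol).differentiable one_ne_zero s₀).hasDerivAt
          have hneg2 : deriv (deriv α) s₀ < 0 :=
            hsec s₀ hs₀0 (le_trans hs₀t htT) hins₀.1 (hPs₀ s₀ hs₀0 le_rfl)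
          have hev := (slope_neg hs2' hneg2).1
          obtain ⟨c, hc1, hc2⟩ := mem_nhdsGT_iff_exists_Ioo_subset.mp hev
          refine ⟨c, hc1, fun s hs => ?_⟩
          have hanti : StrictAntiOn α (Icc s₀ s) := by
            apply strictAntiOn_of_deriv_neg (convex_Icc _ _) hc.continuousOn
            intro x hx
            rw [interior_Icc] at hx
            have hx' : deriv α x < deriv α s₀ := hc2 ⟨hx.1, lt_trans hx.2 hs.2⟩
            rw [← hzero]; exact hx'
          exact (hanti (⟨le_rfl, hs.1.le⟩ : s₀ ∈ Icc s₀ s) ⟨hs.1.le, le_rfl⟩ hs.1).le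
      obtain ⟨c, hcs₀, hcdec⟩ := hdec
      set r := min ((s₀ + c)/2) t with hrdef
      have hrs₀ : s₀ < r := lt_min (by linarith) hlt
      have hrS : r ∈ S := by
        refine ⟨⟨le_trans hs₀0 hrs₀.le, min_le_right _ _⟩, fun s hs0 hsr => ?_⟩
        rcases le_or_gt s s₀ with h | h
        · exact hPs₀ s hs0 h
        · have hsc : s ∈ Ioo s₀ c :=
            ⟨h, lt_of_le_of_lt (le_trans hsr (min_le_left _ _)) (by linarith)⟩
          exact le_trans (hcdec s hsc) (hPs₀ s₀ hs₀0 le_rfl)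
      exact absurd (le_csSup hbdd hrS) (not_le.mpr hrs₀)
    · intro s hs0 hst
      exact hPs₀ s hs0 (heq ▸ hst)
  by_cases hne : ({t : ℝ | 0 ≤ t ∧ (α t = 0 ∨ α t = Real.pi)}).Nonempty
  · rw [if_pos hne]
    set H := {t : ℝ | 0 ≤ t ∧ (α t = 0 ∨ α t = Real.pi)} with hHdef
    have hBdd : BddBelow H := ⟨0, fun x hx => hx.1⟩
    set τ := sInf H with hτdef
    have hτH : τ ∈ H := (hit_closed hc).csInf_mem hne hBdd
    have hpre : ∀ s, 0 ≤ s → s < τ → α s ∈ Ioo 0 Real.pi := by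
      intro s hs0 hsτ
      refine stays hc hα0 hψπ (t := s) (fun r hr0 hrs hmem => ?_) s hs0 le_rfl
      have : τ ≤ r := csInf_le hBdd (⟨hr0, hmem⟩ : r ∈ H)
      linarith
    rcases le_or_gt τ T with hτT | hTτ
    · rw [min_eq_right hτT]
      have hub := core τ hτH.1 hτT hpre
      have hατ : α τ ≤ ψ := hub τ hτH.1 le_rfl
      have hτval : α τ = 0 := by
        rcases hτH.2 with h | h
        · exact h
        · exfalso; rw [h] at hατ; linarith [hψπ.2]
      rw [hτval]; exact ⟨le_rfl, hψ0.le⟩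
    · rw [min_eq_left hTτ.le]
      have hint : ∀ s, 0 ≤ s → s < T → α s ∈ Ioo 0 Real.pi :=
        fun s hs0 hsT => hpre s hs0 (lt_trans hsT hTτ)
      have hub := core T hT le_rfl hint
      exact ⟨(hpre T hT hTτ).1.le, hub T hT le_rfl⟩
  · rw [if_neg hne]
    have hall : ∀ s, 0 ≤ s → α s ∈ Ioo 0 Real.pi := fun s hs =>
      stays hc hα0 hψπ (t := s) (fun r hr0 _ hmem => hne ⟨r, hr0, hmem⟩) s hs le_rfl
    have hint : ∀ s, 0 ≤ s → s < T → α s ∈ Ioo 0 Real.pi := fun s hs0 _ => hall s hs0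
    exact ⟨(hall T hT).1.le, core T hT le_rfl hint T hT le_rfl⟩

open Classical in
lemma aux (g : ℝ) (hg : 0 < g) (u : ℝ → ℝ) (hu : Continuous u) (A : ℝ → ℝ → ℝ)
    (hA : ∀ φ : ℝ, IsPendulumSolution g u (A φ) ∧ A φ 0 = φ ∧ deriv (A φ) 0 = 0)
    (T : ℝ) (hT : 0 ≤ T) (φ₀ : ℝ) (hφ₀ : φ₀ ∈ Icc 0 Real.pi)
    (hcase : φ₀ = 0 ∨ (φ₀ ∈ Ioo 0 Real.pi ∧
      (({t : ℝ | 0 ≤ t ∧ (A φ₀ t = 0 ∨ A φ₀ t = Real.pi)}).Nonempty →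
        sInf {t : ℝ | 0 ≤ t ∧ (A φ₀ t = 0 ∨ A φ₀ t = Real.pi)} ≤ T →
        A φ₀ (sInf {t : ℝ | 0 ≤ t ∧ (A φ₀ t = 0 ∨ A φ₀ t = Real.pi)}) = 0))) :
    ContinuousWithinAt (fun φ : ℝ =>
        if ({t : ℝ | 0 ≤ t ∧ (A φ t = 0 ∨ A φ t = Real.pi)}).Nonempty then
          A φ (min T (sInf {t : ℝ | 0 ≤ t ∧ (A φ t = 0 ∨ A φ t = Real.pi)}))
        else A φ T) (Icc 0 Real.pi) φ₀ := by
  set G : ℝ → ℝ := fun φ : ℝ =>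
      if ({t : ℝ | 0 ≤ t ∧ (A φ t = 0 ∨ A φ t = Real.pi)}).Nonempty then
        A φ (min T (sInf {t : ℝ | 0 ≤ t ∧ (A φ t = 0 ∨ A φ t = Real.pi)}))
      else A φ T with hGdef
  rcases hcase with h0 | ⟨hin, hhit⟩
  · -- boundary case φ₀ = 0
    subst h0
    have hG0 : G 0 = 0 := by
      have h0H : (0:ℝ) ∈ {t : ℝ | 0 ≤ t ∧ (A 0 t = 0 ∨ A 0 t = Real.pi)} :=
        ⟨le_rfl, Or.inl (hA 0).2.1⟩
      have hne : ({t : ℝ | 0 ≤ t ∧ (A 0 t = 0 ∨ A 0 t = Real.pi)}).Nonempty := ⟨0, h0H⟩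
      have hinf : sInf {t : ℝ | 0 ≤ t ∧ (A 0 t = 0 ∨ A 0 t = Real.pi)} = 0 :=
        le_antisymm (csInf_le ⟨0, fun x hx => hx.1⟩ h0H) (le_csInf hne fun b hb => hb.1)
      rw [hGdef]
      simp only [if_pos hne, hinf, min_eq_right hT]
      exact (hA 0).2.1
    obtain ⟨δ0, hδ0pos, hδ0π, htrap⟩ := trap g hg u hu A hA T hT
    rw [Metric.continuousWithinAt_iff]
    intro ε hε
    refine ⟨min δ0 ε, lt_min hδ0pos hε, fun ψ hψmem hψd => ?_⟩
    rw [hG0, Real.dist_eq, sub_zero]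
    rw [Real.dist_eq, sub_zero] at hψd
    rcases hψmem.1.lt_or_eq with hψpos | hψ0
    · have habs : |ψ| = ψ := abs_of_pos hψpos
      rw [habs] at hψd
      have := htrap ψ hψpos (le_of_lt (lt_of_lt_of_le hψd (min_le_left _ _)))
      have hG : G ψ ∈ Icc 0 ψ := this
      rw [abs_of_nonneg hG.1]
      exact lt_of_le_of_lt hG.2 (lt_of_lt_of_le hψd (min_le_right _ _))
    · rw [← hψ0, hG0]
      simpa using hε
  · -- interior case
    set H₀ := {t : ℝ | 0 ≤ t ∧ (A φ₀ t = 0 ∨ A φ₀ t = Real.pi)} with hH₀def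
    have hc₀ : Continuous (A φ₀) := (hA φ₀).1.1.continuous
    have hBdd : BddBelow H₀ := ⟨0, fun x hx => hx.1⟩
    by_cases hbc : H₀.Nonempty ∧ sInf H₀ ≤ T
    · -- case (b): the solution hits the floor at level 0 before time T
      obtain ⟨hne₀, hτ₀T⟩ := hbc
      set τ₀ := sInf H₀ with hτ₀def
      have hval : A φ₀ τ₀ = 0 := hhit hne₀ hτ₀T
      have hτ₀H : τ₀ ∈ H₀ := (hit_closed hc₀).csInf_mem hne₀ hBdd
      have hτ₀nn : 0 ≤ τ₀ := hτ₀H.1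
      have hτ₀pos : 0 < τ₀ := by
        rcases hτ₀nn.lt_or_eq with h | h
        · exact h
        · exfalso; rw [← h, (hA φ₀).2.1] at hval; exact hin.1.ne' hval
      have hpre : ∀ s, 0 ≤ s → s < τ₀ → A φ₀ s ∈ Ioo 0 Real.pi := by
        intro s hs0 hsτ
        refine stays hc₀ (hA φ₀).2.1 hin (t := s) (fun r hr0 hrs hmem => ?_) s hs0 le_rfl
        have : τ₀ ≤ r := csInf_le hBdd (⟨hr0, hmem⟩ : r ∈ H₀)
        linarith
      have hd : deriv (A φ₀) τ₀ < 0 :=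
        hit_deriv_neg hg (hA φ₀).1 (hA φ₀).2.1 hin hne₀ hval
      have hGφ₀ : G φ₀ = 0 := by
        rw [hGdef]
        simp only [if_pos hne₀]
        rw [← hτ₀def, min_eq_right hτ₀T, hval]
        exact if_pos hne₀
      rw [Metric.continuousWithinAt_iff]
      intro ε hε
      -- modulus of continuity of `A φ₀` at `τ₀`
      obtain ⟨γ, hγpos, hγ⟩ := Metric.continuousAt_iff.mp (hc₀.continuousAt (x := τ₀)) (ε/2)
        (by linarith)
      set γ₁ := min γ (min 1 τ₀) with hγ₁def
      have hγ₁pos : 0 < γ₁ := lt_min hγpos (lt_min one_pos hτ₀pos)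
      have hγ₁γ : γ₁ ≤ γ := min_le_left _ _
      have hγ₁1 : γ₁ ≤ 1 := le_trans (min_le_right _ _) (min_le_left _ _)
      have hγ₁τ : γ₁ ≤ τ₀ := le_trans (min_le_right _ _) (min_le_right _ _)
      set a := τ₀ - γ₁/2 with hadef
      have ha0 : 0 < a := by rw [hadef]; linarith
      have haτ : a < τ₀ := by rw [hadef]; linarith
      -- a point right after the crossing where the solution is strictly negative
      have hev := (slope_neg (hasDerivAt_A (hA φ₀).1 τ₀) hd).1
      have hmem : Ioo τ₀ (τ₀ + γ₁/2) ∈ 𝓝[>] τ₀ :=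
        Ioo_mem_nhdsGT_of_mem ⟨le_rfl, by linarith⟩
      obtain ⟨tp, htp1, htp2⟩ := (hev.and (eventually_of_mem hmem (fun x hx => hx))).exists
      rw [hval] at htp1
      -- minimum and maximum of the solution on `[0, a]`
      obtain ⟨a₁, ha₁, hmin⟩ := isCompact_Icc.exists_isMinOn (α := ℝ) ⟨0, ⟨le_rfl, ha0.le⟩⟩
        hc₀.continuousOn
      obtain ⟨a₂, ha₂, hmax⟩ := isCompact_Icc.exists_isMaxOn (α := ℝ) ⟨0, ⟨le_rfl, ha0.le⟩⟩
        hc₀.continuousOn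
      set m := A φ₀ a₁ with hmdef
      set M := A φ₀ a₂ with hMdef
      have hm0 : 0 < m := (hpre a₁ ha₁.1 (lt_of_le_of_lt ha₁.2 haτ)).1
      have hMπ : M < Real.pi := (hpre a₂ ha₂.1 (lt_of_le_of_lt ha₂.2 haτ)).2
      -- Gronwall bound on `[0, T+1]`
      obtain ⟨L, hLpos, hgr⟩ := gronwall g hg u hu A hA (T+1) (by linarith)
      set η := min (min m (Real.pi - M)) (min (-A φ₀ tp) (ε/2)) with hηdef
      have hηpos : 0 < η :=
        lt_min (lt_min hm0 (by linarith)) (lt_min (by linarith) (by linarith))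
      refine ⟨η/(2*L), by positivity, fun ψ hψmem hψd => ?_⟩
      rw [Real.dist_eq] at hψd
      have hgb : ∀ s ∈ Icc (0:ℝ) (T+1), |A ψ s - A φ₀ s| < η := by
        intro s hs
        have h1 := hgr ψ φ₀ s hs
        have h2 : L * |ψ - φ₀| < L * (η/(2*L)) := by
          apply mul_lt_mul_of_pos_left hψd hLpos
        have h3 : L * (η/(2*L)) = η/2 := by field_simp
        calc |A ψ s - A φ₀ s| ≤ L * |ψ - φ₀| := h1
          _ < η/2 := by rw [← h3]; exact h2
          _ < η := by linarith
      -- the perturbed solution also hits zero before `tp`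
      have htpT : tp ≤ T + 1 := by
        have := htp2.2
        have h1 : γ₁/2 ≤ 1 := by linarith
        linarith
      have htp0 : (0:ℝ) ≤ tp := le_trans hτ₀nn htp2.1.le
      have hψtp : A ψ tp < 0 := by
        have h1 := hgb tp ⟨htp0, htpT⟩
        have h2 : η ≤ -A φ₀ tp := le_trans (min_le_right _ _) (min_le_left _ _)
        have := abs_lt.mp h1
        linarith [this.1, this.2]
      have hψ0 : A ψ 0 = ψ := (hA ψ).2.1
      have hcψ : Continuous (A ψ) := (hA ψ).1.1.continuous
      have hzero : (0:ℝ) ∈ Icc (A ψ tp) (A ψ 0) := by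
        rw [hψ0]; exact ⟨hψtp.le, hψmem.1⟩
      obtain ⟨r, hr, hr0⟩ := intermediate_value_Icc' htp0 hcψ.continuousOn hzero
      set Hψ := {t : ℝ | 0 ≤ t ∧ (A ψ t = 0 ∨ A ψ t = Real.pi)} with hHψdef
      have hrH : r ∈ Hψ := ⟨hr.1, Or.inl hr0⟩
      have hneψ : Hψ.Nonempty := ⟨r, hrH⟩
      have hBddψ : BddBelow Hψ := ⟨0, fun x hx => hx.1⟩
      set τψ := sInf Hψ with hτψdef
      have hτψr : τψ ≤ r := csInf_le hBddψ hrH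
      have hτψtp : τψ ≤ tp := le_trans hτψr hr.2
      -- every element of `Hψ` is at least `a`
      have haτψ : a ≤ τψ := by
        apply le_csInf hneψ
        intro x hx
        by_contra hcon
        push_neg at hcon
        have hxa : x ∈ Icc 0 a := ⟨hx.1, hcon.le⟩
        have hxm : m ≤ A φ₀ x := hmin hxa
        have hxM : A φ₀ x ≤ M := hmax hxa
        have hxT : x ≤ T + 1 := by
          have : a ≤ T := by linarith
          linarith [hxa.2]
        have h1 := abs_lt.mp (hgb x ⟨hx.1, hxT⟩)
        have hηm : η ≤ m := le_trans (min_le_left _ _) (min_le_left _ _)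
        have hηM : η ≤ Real.pi - M := le_trans (min_le_left _ _) (min_le_right _ _)
        rcases hx.2 with h | h <;> rw [h] at h1 <;> [linarith [h1.1]; linarith [h1.2]]
      set sstar := min T τψ with hsstardef
      have hsa : a ≤ sstar := le_min (by linarith) haτψ
      have hsup : sstar ≤ τ₀ + γ₁/2 := by
        have h1 : τψ ≤ τ₀ + γ₁/2 := le_trans hτψtp htp2.2.le
        exact le_trans (min_le_right _ _) h1
      have hsT1 : sstar ∈ Icc (0:ℝ) (T+1) := ⟨le_trans ha0.le hsa, by
        have := min_le_left T τψ; linarith⟩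
      have hsdist : dist sstar τ₀ < γ := by
        rw [Real.dist_eq, abs_lt]
        have h1 : τ₀ - γ₁/2 ≤ sstar := by rw [← hadef]; exact hsa
        constructor
        · linarith
        · linarith [hsup]
      have hα₀s : |A φ₀ sstar| < ε/2 := by
        have := hγ hsdist
        rw [Real.dist_eq, hval, sub_zero] at this
        exact this
      have hGψ : G ψ = A ψ sstar := by
        rw [hGdef]; simp only [if_pos hneψ]
        exact if_pos hneψ
      rw [hGψ, hGφ₀, Real.dist_eq, sub_zero]
      have h1 := hgb sstar hsT1
      have hηε : η ≤ ε/2 := le_trans (min_le_right _ _) (min_le_right _ _)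
      calc |A ψ sstar| ≤ |A ψ sstar - A φ₀ sstar| + |A φ₀ sstar| := by
            calc |A ψ sstar| = |(A ψ sstar - A φ₀ sstar) + A φ₀ sstar| := by
                  rw [sub_add_cancel]
              _ ≤ _ := abs_add_le _ _
        _ < η + ε/2 := add_lt_add_of_lt_of_le h1 hα₀s.le
        _ ≤ ε := by linarith
    · -- case (a): no hit before time `T`
      have hIoo : ∀ s, 0 ≤ s → s ≤ T → A φ₀ s ∈ Ioo 0 Real.pi := by
        rw [not_and_or] at hbc
        rcases hbc with hne | hlate
        · intro s hs0 _
          exact stays hc₀ (hA φ₀).2.1 hin (t := s)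
            (fun r hr0 _ hmem => hne ⟨r, hr0, hmem⟩) s hs0 le_rfl
        · push_neg at hlate
          intro s hs0 hsT
          refine stays hc₀ (hA φ₀).2.1 hin (t := s) (fun r hr0 hrs hmem => ?_) s hs0 le_rfl
          have : sInf H₀ ≤ r := csInf_le hBdd (⟨hr0, hmem⟩ : r ∈ H₀)
          linarith
      obtain ⟨a₁, ha₁, hmin⟩ := isCompact_Icc.exists_isMinOn (α := ℝ) ⟨0, ⟨le_rfl, hT⟩⟩
        hc₀.continuousOn
      obtain ⟨a₂, ha₂, hmax⟩ := isCompact_Icc.exists_isMaxOn (α := ℝ) ⟨0, ⟨le_rfl, hT⟩⟩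
        hc₀.continuousOn
      set m := A φ₀ a₁ with hmdef
      set M := A φ₀ a₂ with hMdef
      have hm0 : 0 < m := (hIoo a₁ ha₁.1 ha₁.2).1
      have hMπ : M < Real.pi := (hIoo a₂ ha₂.1 ha₂.2).2
      obtain ⟨L, hLpos, hgr⟩ := gronwall g hg u hu A hA T hT
      rw [Metric.continuousWithinAt_iff]
      intro ε hε
      set η := min (min m (Real.pi - M)) (ε/2) with hηdef
      have hηpos : 0 < η := lt_min (lt_min hm0 (by linarith)) (by linarith)
      refine ⟨η/(2*L), by positivity, fun ψ hψmem hψd => ?_⟩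
      rw [Real.dist_eq] at hψd
      have hgb : ∀ χ : ℝ, |χ - φ₀| < η/(2*L) → ∀ s ∈ Icc (0:ℝ) T, |A χ s - A φ₀ s| < η := by
        intro χ hχ s hs
        have h1 := hgr χ φ₀ s hs
        have h2 : L * |χ - φ₀| < L * (η/(2*L)) := mul_lt_mul_of_pos_left hχ hLpos
        have h3 : L * (η/(2*L)) = η/2 := by field_simp
        calc |A χ s - A φ₀ s| ≤ L * |χ - φ₀| := h1
          _ < η/2 := by rw [← h3]; exact h2
          _ < η := by linarith
      have hval : ∀ χ : ℝ, |χ - φ₀| < η/(2*L) → G χ = A χ T := by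
        intro χ hχ
        have hstay : ∀ s, 0 ≤ s → s ≤ T → A χ s ∈ Ioo 0 Real.pi := by
          intro s hs0 hsT
          have h1 := abs_lt.mp (hgb χ hχ s ⟨hs0, hsT⟩)
          have h2 : m ≤ A φ₀ s := hmin (⟨hs0, hsT⟩ : s ∈ Icc 0 T)
          have h3 : A φ₀ s ≤ M := hmax (⟨hs0, hsT⟩ : s ∈ Icc 0 T)
          have hηm : η ≤ m := le_trans (min_le_left _ _) (min_le_left _ _)
          have hηM : η ≤ Real.pi - M := le_trans (min_le_left _ _) (min_le_right _ _)
          constructor <;> [linarith [h1.1]; linarith [h1.2]]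
        by_cases hneχ : ({t : ℝ | 0 ≤ t ∧ (A χ t = 0 ∨ A χ t = Real.pi)}).Nonempty
        · have hTle : T ≤ sInf {t : ℝ | 0 ≤ t ∧ (A χ t = 0 ∨ A χ t = Real.pi)} := by
            apply le_csInf hneχ
            intro x hx
            by_contra hcon
            push_neg at hcon
            have := hstay x hx.1 hcon.le
            rcases hx.2 with h | h <;> rw [h] at this
            · exact lt_irrefl _ this.1
            · exact lt_irrefl _ this.2
          rw [hGdef]
          simp only [if_pos hneχ, min_eq_left hTle]
        · rw [hGdef]; simp only [if_neg hneχ]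
      have hGψ := hval ψ hψd
      have hGφ₀ := hval φ₀ (by rw [sub_self, abs_zero]; positivity)
      rw [hGψ, hGφ₀, Real.dist_eq]
      have h1 := hgb ψ hψd T ⟨hT, le_rfl⟩
      have hηε : η ≤ ε/2 := min_le_right _ _
      linarith [h1]

lemma reflect_sol (g : ℝ) (u : ℝ → ℝ) {α : ℝ → ℝ} (hα : IsPendulumSolution g u α) :
    IsPendulumSolution g (fun t => -u t) (fun t => Real.pi - α t) := by
  constructor
  · exact contDiff_const.sub hα.1
  · intro t
    have hd : deriv (fun s => Real.pi - α s) = fun s => -deriv α s := by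
      funext s
      rw [deriv_const_sub]
    rw [hd, deriv.fun_neg, hα.2 t, Real.cos_pi_sub, Real.sin_pi_sub]
    ring

end Pend

open Real Set Filter Topology Pend

open Classical in
theorem pendulum_stopped_map_continuous (g : ℝ) (hg : 0 < g)
    (u : ℝ → ℝ) (hu : Continuous u) (A : ℝ → ℝ → ℝ)
    (hA : ∀ φ : ℝ, IsPendulumSolution g u (A φ) ∧ A φ 0 = φ ∧ deriv (A φ) 0 = 0)
    (T : ℝ) (hT : 0 ≤ T) :
    ContinuousOn
      (fun φ : ℝ =>
        if ({t : ℝ | 0 ≤ t ∧ (A φ t = 0 ∨ A φ t = Real.pi)}).Nonempty then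
          A φ (min T (sInf {t : ℝ | 0 ≤ t ∧ (A φ t = 0 ∨ A φ t = Real.pi)}))
        else A φ T)
      (Set.Icc (0 : ℝ) Real.pi) := by
  intro φ₀ hφ₀
  -- reflected family
  set B : ℝ → ℝ → ℝ := fun ψ t => Real.pi - A (Real.pi - ψ) t with hBdef
  have hB : ∀ ψ : ℝ, IsPendulumSolution g (fun t => -u t) (B ψ) ∧ B ψ 0 = ψ ∧
      deriv (B ψ) 0 = 0 := by
    intro ψ
    refine ⟨reflect_sol g u (hA (Real.pi - ψ)).1, ?_, ?_⟩
    · show Real.pi - A (Real.pi - ψ) 0 = ψ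
      rw [(hA (Real.pi - ψ)).2.1]; ring
    · show deriv (fun t => Real.pi - A (Real.pi - ψ) t) 0 = 0
      rw [deriv_const_sub, (hA (Real.pi - ψ)).2.2, neg_zero]
  have hHeq : ∀ φ : ℝ, {t : ℝ | 0 ≤ t ∧ (B (Real.pi - φ) t = 0 ∨ B (Real.pi - φ) t = Real.pi)}
      = {t : ℝ | 0 ≤ t ∧ (A φ t = 0 ∨ A φ t = Real.pi)} := by
    intro φ
    ext t
    have hBt : B (Real.pi - φ) t = Real.pi - A φ t := by
      show Real.pi - A (Real.pi - (Real.pi - φ)) t = Real.pi - A φ t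
      rw [sub_sub_cancel]
    simp only [mem_setOf_eq, hBt]
    constructor
    · rintro ⟨h1, h2 | h2⟩
      · exact ⟨h1, Or.inr (by linarith)⟩
      · exact ⟨h1, Or.inl (by linarith)⟩
    · rintro ⟨h1, h2 | h2⟩
      · exact ⟨h1, Or.inr (by rw [h2]; ring)⟩
      · exact ⟨h1, Or.inl (by rw [h2]; ring)⟩
  have key : ∀ φ : ℝ,
      (fun φ : ℝ =>
        if ({t : ℝ | 0 ≤ t ∧ (A φ t = 0 ∨ A φ t = Real.pi)}).Nonempty then
          A φ (min T (sInf {t : ℝ | 0 ≤ t ∧ (A φ t = 0 ∨ A φ t = Real.pi)}))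
        else A φ T) φ
      = Real.pi - (fun ψ : ℝ =>
        if ({t : ℝ | 0 ≤ t ∧ (B ψ t = 0 ∨ B ψ t = Real.pi)}).Nonempty then
          B ψ (min T (sInf {t : ℝ | 0 ≤ t ∧ (B ψ t = 0 ∨ B ψ t = Real.pi)}))
        else B ψ T) (Real.pi - φ) := by
    intro φ
    simp only [hHeq φ]
    have hBt : ∀ s : ℝ, B (Real.pi - φ) s = Real.pi - A φ s := by
      intro s
      show Real.pi - A (Real.pi - (Real.pi - φ)) s = Real.pi - A φ s
      rw [sub_sub_cancel]
    by_cases hne : ({t : ℝ | 0 ≤ t ∧ (A φ t = 0 ∨ A φ t = Real.pi)}).Nonempty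
    · rw [if_pos hne, if_pos hne, hBt]; ring
    · rw [if_neg hne, if_neg hne, hBt]; ring
  -- helper to transfer continuity from the reflected family
  have htransfer :
      ContinuousWithinAt (fun ψ : ℝ =>
        if ({t : ℝ | 0 ≤ t ∧ (B ψ t = 0 ∨ B ψ t = Real.pi)}).Nonempty then
          B ψ (min T (sInf {t : ℝ | 0 ≤ t ∧ (B ψ t = 0 ∨ B ψ t = Real.pi)}))
        else B ψ T) (Icc 0 Real.pi) (Real.pi - φ₀) →
      ContinuousWithinAt (fun φ : ℝ =>
        if ({t : ℝ | 0 ≤ t ∧ (A φ t = 0 ∨ A φ t = Real.pi)}).Nonempty then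
          A φ (min T (sInf {t : ℝ | 0 ≤ t ∧ (A φ t = 0 ∨ A φ t = Real.pi)}))
        else A φ T) (Icc 0 Real.pi) φ₀ := by
    intro h1
    have h2 : ContinuousWithinAt (fun φ : ℝ => Real.pi - φ) (Icc 0 Real.pi) φ₀ :=
      (continuous_const.sub continuous_id).continuousWithinAt
    have h3 := h1.comp h2
      (fun x hx => ⟨by linarith [hx.2], by linarith [hx.1]⟩)
    have hout : Continuous (fun y : ℝ => Real.pi - y) := continuous_const.sub continuous_id
    have h4 := hout.continuousAt.comp_continuousWithinAt h3
    exact h4.congr (fun x _ => key x) (key φ₀)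
  by_cases hzero : φ₀ = 0
  · exact aux g hg u hu A hA T hT φ₀ hφ₀ (Or.inl hzero)
  by_cases hpi : φ₀ = Real.pi
  · apply htransfer
    apply aux g hg (fun t => -u t) hu.neg B hB T hT
    · exact ⟨by linarith [hφ₀.2], by linarith [hφ₀.1]⟩
    · exact Or.inl (by rw [hpi, sub_self])
  have hinφ : φ₀ ∈ Ioo 0 Real.pi :=
    ⟨hφ₀.1.lt_of_ne (Ne.symm hzero), hφ₀.2.lt_of_ne hpi⟩
  by_cases hhitpi : ({t : ℝ | 0 ≤ t ∧ (A φ₀ t = 0 ∨ A φ₀ t = Real.pi)}).Nonempty ∧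
      sInf {t : ℝ | 0 ≤ t ∧ (A φ₀ t = 0 ∨ A φ₀ t = Real.pi)} ≤ T ∧
      A φ₀ (sInf {t : ℝ | 0 ≤ t ∧ (A φ₀ t = 0 ∨ A φ₀ t = Real.pi)}) = Real.pi
  · apply htransfer
    apply aux g hg (fun t => -u t) hu.neg B hB T hT
    · exact ⟨by linarith [hinφ.2], by linarith [hinφ.1]⟩
    · refine Or.inr ⟨⟨by linarith [hinφ.2], by linarith [hinφ.1]⟩, ?_⟩
      rw [hHeq φ₀]
      intro hne hle
      have hBt : B (Real.pi - φ₀) (sInf {t : ℝ | 0 ≤ t ∧ (A φ₀ t = 0 ∨ A φ₀ t = Real.pi)})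
          = Real.pi - A φ₀ (sInf {t : ℝ | 0 ≤ t ∧ (A φ₀ t = 0 ∨ A φ₀ t = Real.pi)}) := by
        show Real.pi - A (Real.pi - (Real.pi - φ₀)) _ = _
        rw [sub_sub_cancel]
      rw [hBt, hhitpi.2.2, sub_self]
  · apply aux g hg u hu A hA T hT φ₀ hφ₀
    refine Or.inr ⟨hinφ, fun hne hle => ?_⟩
    have hc₀ : Continuous (A φ₀) := (hA φ₀).1.1.continuous
    have hτH := (hit_closed hc₀).csInf_mem hne ⟨0, fun x hx => hx.1⟩
    rcases hτH.2 with h | h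
    · exact h
    · exact absurd ⟨hne, hle, h⟩ hhitpi
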